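/- arXiv:2212.02543 — 2 statements merged into one kernel-verified Lean document; each statement's English description precedes it below -/
import Mathlib

section
/- Let {F_m} be a POVM on a finite-dimensional Hilbert space with each F_m of rank at most 1, and suppose the superoperator M = ∑_m Tr[F_m] |F̃_m⟩⟩⟨⟨F̃_m| (where F̃_m = F_m/Tr[F_m] for Tr[F_m] > 0) is invertible. Then for any Hermitian observable O and any density matrix ρ, the estimator w_m = Tr[M⁻¹[O] F̃_m] is unbiased: ∑_m Tr[F_m ρ] w_m = Tr[O ρ]. -/
open Matrix
open scoped ComplexOrder

lemma psd_trace_zero_eq_zero {d : ℕ} {A : Matrix (Fin d) (Fin d) ℂ}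
    (hA : A.PosSemidef) (h : A.trace = 0) : A = 0 := by
  obtain ⟨B, rfl⟩ : ∃ B : Matrix (Fin d) (Fin d) ℂ, A = Bᴴ * B := by
    open scoped MatrixOrder in
    exact ⟨CFC.sqrt A, by
      rw [← star_eq_conjTranspose, (CFC.sqrt_nonneg A).isSelfAdjoint.star_eq,
        CFC.sqrt_mul_sqrt_self A hA.nonneg]⟩
  have hB : ∀ i j, B i j = 0 := by
    have h' : ∑ i, ∑ j, star (B j i) * B j i = 0 := by
      simpa [Matrix.trace, Matrix.mul_apply, Matrix.conjTranspose_apply] using h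
    have hnn : ∀ i ∈ Finset.univ, (0:ℂ) ≤ ∑ j, star (B j i) * B j i :=
      fun i _ => Finset.sum_nonneg fun j _ => star_mul_self_nonneg _
    intro i j
    have h1 := (Finset.sum_eq_zero_iff_of_nonneg hnn).mp h' j (Finset.mem_univ _)
    have h2 := (Finset.sum_eq_zero_iff_of_nonneg
      (fun k _ => star_mul_self_nonneg (B k j))).mp h1 i (Finset.mem_univ _)
    have h3 : Complex.normSq (B i j) = 0 := by
      have := h2
      rw [mul_comm] at this
      exact_mod_cast by simpa [Complex.mul_conj] using this
    exact Complex.normSq_eq_zero.mp h3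
  have : B = 0 := by ext i j; exact hB i j
  simp [this]

/-- for a rank-one POVM `{F_m}` with invertible measurement channel
`M = ∑_m Tr[F_m] |F̃_m⟩⟩⟨⟨F̃_m|`, the linear estimator with weights
`w_m = Tr[M⁻¹[O] F̃_m]` is unbiased: `∑_m Tr[F_m ρ] w_m = Tr[O ρ]`. -/
theorem shadow_estimator_unbiased
    (d n : ℕ)
    (F : Fin n → Matrix (Fin d) (Fin d) ℂ)
    (hFpsd : ∀ m, (F m).PosSemidef)
    (hFrank : ∀ m, (F m).rank ≤ 1)
    (hFsum : ∑ m, F m = 1)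
    -- normalized POVM elements `F̃_m = F_m / Tr[F_m]` (for `Tr[F_m] > 0`)
    (Ft : Fin n → Matrix (Fin d) (Fin d) ℂ)
    (hFt : ∀ m, (F m).trace ≠ 0 → Ft m = ((F m).trace)⁻¹ • F m)
    -- the superoperator `M = ∑_m Tr[F_m] |F̃_m⟩⟩⟨⟨F̃_m|`
    (M Minv : Matrix (Fin d) (Fin d) ℂ → Matrix (Fin d) (Fin d) ℂ)
    (hM : ∀ A, M A = ∑ m, (F m).trace • ((Ft m)ᴴ * A).trace • Ft m)
    -- `M` is invertible with (two-sided) inverse `Minv`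
    (hInv₁ : ∀ A, Minv (M A) = A) (hInv₂ : ∀ A, M (Minv A) = A)
    -- observable and state
    (O : Matrix (Fin d) (Fin d) ℂ) (hO : O.IsHermitian)
    (ρ : Matrix (Fin d) (Fin d) ℂ) (hρ : ρ.PosSemidef) (hρtr : ρ.trace = 1) :
    ∑ m, (F m * ρ).trace * (Minv O * Ft m).trace = (O * ρ).trace := by
  conv_rhs => rw [← hInv₂ O, hM]
  rw [Finset.sum_mul, Matrix.trace_sum]
  refine Finset.sum_congr rfl fun m _ => ?_
  by_cases h0 : (F m).trace = 0
  · have hz : F m = 0 := psd_trace_zero_eq_zero (hFpsd m) h0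
    simp [hz, h0]
  · have hc : star (F m).trace = (F m).trace := by
      rw [← Matrix.trace_conjTranspose, (hFpsd m).1.eq]
    rw [hFt m h0]
    simp only [Matrix.conjTranspose_smul, (hFpsd m).1.eq, star_inv₀, hc,
      Matrix.smul_mul, Matrix.mul_smul, Matrix.trace_smul, smul_eq_mul,
      smul_smul]
    rw [Matrix.trace_mul_comm (Minv O) (F m)]
    field_simp
end

section
/- Define R = (d+1)²[π_{(12)} + π_{(123)} + π_{(132)}] − (d+1)[π_e + π_{(13)} + π_{(23)}] on H^{⊗3} with dim H = d. Then the singular values of R are 0, 3d(d+1), (d+1)(d+2), and 2(d+1)(d+2), with multiplicities 2·C(d+1,3), C(d+2,3), C(d,3), and 2·C(d+1,3) respectively, where C(n,k) is the binomial coefficient. -/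
open Matrix

/-- The permutation operator `π_σ` on `H^{⊗3}`, with matrix elements `δ_{i, j∘σ}`. -/
def permOp3 (d : ℕ) (σ : Equiv.Perm (Fin 3)) :
    Matrix (Fin 3 → Fin d) (Fin 3 → Fin d) ℂ :=
  Matrix.of fun i j => if i = j ∘ σ then 1 else 0

lemma permOp3_mul (d : ℕ) (σ τ : Equiv.Perm (Fin 3)) :
    permOp3 d σ * permOp3 d τ = permOp3 d (τ * σ) := by
  ext i j
  rw [Matrix.mul_apply]
  simp only [permOp3, Matrix.of_apply]
  rw [Finset.sum_eq_single (j ∘ τ)]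
  · have : (j ∘ ⇑τ) ∘ ⇑σ = j ∘ ⇑(τ * σ) := by
      funext x; simp [Equiv.Perm.mul_apply]
    simp [this]; congr
  · intro k _ hk
    simp [hk]
  · intro h; exact absurd (Finset.mem_univ _) h

lemma permOp3_mul' (d : ℕ) {σ τ ρ : Equiv.Perm (Fin 3)} (h : τ * σ = ρ) :
    permOp3 d σ * permOp3 d τ = permOp3 d ρ := by rw [permOp3_mul, h]

lemma permOp3_conjTranspose (d : ℕ) (σ : Equiv.Perm (Fin 3)) :
    (permOp3 d σ)ᴴ = permOp3 d σ⁻¹ := by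
  ext i j
  simp only [conjTranspose_apply, permOp3, Matrix.of_apply]
  have : (j = i ∘ ⇑σ) ↔ (i = j ∘ ⇑σ⁻¹) := by
    constructor
    · rintro rfl; funext x; simp
    · rintro rfl; funext x; simp
  simp only [this]
  split <;> simp

def tripleEquiv (d : ℕ) : (Fin d × Fin d × Fin d) ≃ (Fin 3 → Fin d) where
  toFun p := ![p.1, p.2.1, p.2.2]
  invFun f := (f 0, f 1, f 2)
  left_inv p := rfl
  right_inv f := by funext x; fin_cases x <;> rfl

lemma permOp3_trace (d : ℕ) (σ : Equiv.Perm (Fin 3)) :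
    (permOp3 d σ).trace = ∑ p : Fin d × Fin d × Fin d,
      if ![p.1, p.2.1, p.2.2] = ![p.1, p.2.1, p.2.2] ∘ σ then 1 else 0 := by
  rw [Matrix.trace, ← Equiv.sum_comp (tripleEquiv d)]
  rfl

lemma trace_e (d : ℕ) : (permOp3 d 1).trace = (d:ℂ)^3 := by
  rw [permOp3_trace]
  simp [Finset.card_univ]
  ring

lemma trace_s01 (d : ℕ) : (permOp3 d (Equiv.swap 0 1)).trace = (d:ℂ)^2 := by
  rw [permOp3_trace]
  have cond : ∀ a b c : Fin d,
      (![a,b,c] = ![a,b,c] ∘ (Equiv.swap (0:Fin 3) 1)) ↔ b = a := by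
    intro a b c
    rw [funext_iff]
    constructor
    · intro h; have := h 0; simp [Equiv.swap_apply_def] at this; exact this.symm
    · intro h x; fin_cases x <;> simp [h, Equiv.swap_apply_def]
  simp only [cond]
  simp only [Fintype.sum_prod_type]
  simp [apply_ite Finset.card, Finset.sum_ite_eq', Finset.card_univ]
  ring

lemma trace_s02 (d : ℕ) : (permOp3 d (Equiv.swap 0 2)).trace = (d:ℂ)^2 := by
  rw [permOp3_trace]
  have cond : ∀ a b c : Fin d,
      (![a,b,c] = ![a,b,c] ∘ (Equiv.swap (0:Fin 3) 2)) ↔ c = a := by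
    intro a b c
    rw [funext_iff]
    constructor
    · intro h; have := h 0; simp [Equiv.swap_apply_def] at this; exact this.symm
    · intro h x; fin_cases x <;> simp [h, Equiv.swap_apply_def]
  simp only [cond]
  simp only [Fintype.sum_prod_type]
  simp [apply_ite Finset.card, Finset.sum_ite_eq', Finset.card_univ]
  ring

lemma trace_s12 (d : ℕ) : (permOp3 d (Equiv.swap 1 2)).trace = (d:ℂ)^2 := by
  rw [permOp3_trace]
  have cond : ∀ a b c : Fin d,
      (![a,b,c] = ![a,b,c] ∘ (Equiv.swap (1:Fin 3) 2)) ↔ c = b := by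
    intro a b c
    rw [funext_iff]
    constructor
    · intro h; have := h 1; simp [Equiv.swap_apply_def] at this; exact this.symm
    · intro h x; fin_cases x <;> simp [h, Equiv.swap_apply_def]
  simp only [cond]
  simp only [Fintype.sum_prod_type]
  simp [apply_ite Finset.card, Finset.sum_ite_eq', Finset.card_univ]
  ring

lemma trace_rot (d : ℕ) : (permOp3 d (finRotate 3)).trace = (d:ℂ) := by
  rw [permOp3_trace]
  have e0 : (finRotate 3) (0:Fin 3) = 1 := by decide
  have e1 : (finRotate 3) (1:Fin 3) = 2 := by decide
  have e2 : (finRotate 3) (2:Fin 3) = 0 := by decide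
  have cond : ∀ a b c : Fin d,
      (![a,b,c] = ![a,b,c] ∘ (finRotate 3)) ↔ (b = a ∧ c = b) := by
    intro a b c
    rw [funext_iff]
    constructor
    · intro h
      have h0 := h 0; have h1 := h 1
      simp [e0, e1] at h0 h1
      exact ⟨h0.symm, h1.symm⟩
    · rintro ⟨rfl, rfl⟩ x; fin_cases x <;> simp [e0, e1, e2]
  simp only [cond]
  have key : ∀ x x1 : Fin d, (∑ x2 : Fin d, if x1 = x then (if x2 = x1 then (1:ℂ) else 0) else 0) = if x1 = x then 1 else 0 := by
    intro x x1; split <;> simp [Finset.sum_ite_eq']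
  simp only [Fintype.sum_prod_type, ite_and]
  simp [key, Finset.sum_ite_eq', Finset.card_univ]

lemma trace_rot2 (d : ℕ) : (permOp3 d (finRotate 3)⁻¹).trace = (d:ℂ) := by
  rw [permOp3_trace]
  have e0 : ((finRotate 3)⁻¹ : Equiv.Perm (Fin 3)) (0:Fin 3) = 2 := by decide
  have e1 : ((finRotate 3)⁻¹ : Equiv.Perm (Fin 3)) (1:Fin 3) = 0 := by decide
  have e2 : ((finRotate 3)⁻¹ : Equiv.Perm (Fin 3)) (2:Fin 3) = 1 := by decide
  have cond : ∀ a b c : Fin d,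
      (![a,b,c] = ![a,b,c] ∘ ⇑((finRotate 3)⁻¹ : Equiv.Perm (Fin 3))) ↔ (b = a ∧ c = b) := by
    intro a b c
    rw [funext_iff]
    constructor
    · intro h
      have h1 := h 1; have h2 := h 2
      simp [e1, e2] at h1 h2
      exact ⟨h1, h2⟩
    · rintro ⟨rfl, rfl⟩ x; fin_cases x <;> simp [e0, e1, e2]
  simp only [cond]
  have key : ∀ x x1 : Fin d, (∑ x2 : Fin d, if x1 = x then (if x2 = x1 then (1:ℂ) else 0) else 0) = if x1 = x then 1 else 0 := by
    intro x x1; split <;> simp [Finset.sum_ite_eq']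
  simp only [Fintype.sum_prod_type, ite_and]
  simp [key, Finset.sum_ite_eq', Finset.card_univ]

lemma multiset_decomp {α : Type*} [DecidableEq α] (v1 v2 v3 v4 : α)
    (h12 : v1 ≠ v2) (h13 : v1 ≠ v3) (h14 : v1 ≠ v4)
    (h23 : v2 ≠ v3) (h24 : v2 ≠ v4) (h34 : v3 ≠ v4)
    (s : Multiset α) (hmem : ∀ x ∈ s, x = v1 ∨ x = v2 ∨ x = v3 ∨ x = v4) :
    s = Multiset.replicate (s.count v1) v1 + Multiset.replicate (s.count v2) v2
      + Multiset.replicate (s.count v3) v3 + Multiset.replicate (s.count v4) v4 := by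
  ext a
  simp only [Multiset.count_add, Multiset.count_replicate]
  by_cases e1 : a = v1
  · subst e1; simp [Ne.symm h12, Ne.symm h13, Ne.symm h14]
  by_cases e2 : a = v2
  · subst e2; simp [h12, Ne.symm h23, Ne.symm h24]
  by_cases e3 : a = v3
  · subst e3; simp [h13, h23, Ne.symm h34]
  by_cases e4 : a = v4
  · subst e4; simp [h14, h24, h34]
  · have : a ∉ s := fun hin => by rcases hmem a hin with h|h|h|h <;> simp_all
    simp [Ne.symm e1, Ne.symm e2, Ne.symm e3, Ne.symm e4, Multiset.count_eq_zero_of_notMem this]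

lemma two_choose (n : ℕ) : 2 * Nat.choose (n+2) 2 = (n+2)*(n+1) := by
  induction n with
  | zero => rfl
  | succ k ih =>
    calc 2 * Nat.choose (k+1+2) 2 = 2 * Nat.choose (k+2) 1 + 2 * Nat.choose (k+2) 2 := by
          rw [show k+1+2 = (k+2)+1 from rfl, Nat.choose_succ_succ (k+2) 1]; ring
    _ = 2 * (k+2) + (k+2)*(k+1) := by rw [ih, Nat.choose_one_right]
    _ = (k+1+2)*(k+1+1) := by ring

lemma six_choose (n : ℕ) : 6 * Nat.choose (n+2) 3 = (n+2)*(n+1)*n := by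
  induction n with
  | zero => rfl
  | succ m ih =>
    calc 6 * Nat.choose (m+1+2) 3
        = 3 * (2 * Nat.choose (m+2) 2) + 6 * Nat.choose (m+2) 3 := by
          rw [show m+1+2 = (m+2)+1 from rfl, Nat.choose_succ_succ (m+2) 2]; ring
    _ = 3 * ((m+2)*(m+1)) + (m+2)*(m+1)*m := by rw [ih, two_choose]
    _ = (m+1+2)*(m+1+1)*(m+1) := by ring


lemma pmee (d : ℕ) : permOp3 d (1 : Equiv.Perm (Fin 3)) * permOp3 d (1 : Equiv.Perm (Fin 3)) = permOp3 d (1 : Equiv.Perm (Fin 3)) := permOp3_mul' d (by decide)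
lemma pmea (d : ℕ) : permOp3 d (1 : Equiv.Perm (Fin 3)) * permOp3 d (Equiv.swap (0:Fin 3) 1) = permOp3 d (Equiv.swap (0:Fin 3) 1) := permOp3_mul' d (by decide)
lemma pmeb (d : ℕ) : permOp3 d (1 : Equiv.Perm (Fin 3)) * permOp3 d (Equiv.swap (0:Fin 3) 2) = permOp3 d (Equiv.swap (0:Fin 3) 2) := permOp3_mul' d (by decide)
lemma pmec (d : ℕ) : permOp3 d (1 : Equiv.Perm (Fin 3)) * permOp3 d (Equiv.swap (1:Fin 3) 2) = permOp3 d (Equiv.swap (1:Fin 3) 2) := permOp3_mul' d (by decide)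
lemma pmef (d : ℕ) : permOp3 d (1 : Equiv.Perm (Fin 3)) * permOp3 d (finRotate 3) = permOp3 d (finRotate 3) := permOp3_mul' d (by decide)
lemma pmeg (d : ℕ) : permOp3 d (1 : Equiv.Perm (Fin 3)) * permOp3 d ((finRotate 3)⁻¹) = permOp3 d ((finRotate 3)⁻¹) := permOp3_mul' d (by decide)
lemma pmae (d : ℕ) : permOp3 d (Equiv.swap (0:Fin 3) 1) * permOp3 d (1 : Equiv.Perm (Fin 3)) = permOp3 d (Equiv.swap (0:Fin 3) 1) := permOp3_mul' d (by decide)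
lemma pmaa (d : ℕ) : permOp3 d (Equiv.swap (0:Fin 3) 1) * permOp3 d (Equiv.swap (0:Fin 3) 1) = permOp3 d (1 : Equiv.Perm (Fin 3)) := permOp3_mul' d (by decide)
lemma pmab (d : ℕ) : permOp3 d (Equiv.swap (0:Fin 3) 1) * permOp3 d (Equiv.swap (0:Fin 3) 2) = permOp3 d (finRotate 3) := permOp3_mul' d (by decide)
lemma pmac (d : ℕ) : permOp3 d (Equiv.swap (0:Fin 3) 1) * permOp3 d (Equiv.swap (1:Fin 3) 2) = permOp3 d ((finRotate 3)⁻¹) := permOp3_mul' d (by decide)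
lemma pmaf (d : ℕ) : permOp3 d (Equiv.swap (0:Fin 3) 1) * permOp3 d (finRotate 3) = permOp3 d (Equiv.swap (0:Fin 3) 2) := permOp3_mul' d (by decide)
lemma pmag (d : ℕ) : permOp3 d (Equiv.swap (0:Fin 3) 1) * permOp3 d ((finRotate 3)⁻¹) = permOp3 d (Equiv.swap (1:Fin 3) 2) := permOp3_mul' d (by decide)
lemma pmbe (d : ℕ) : permOp3 d (Equiv.swap (0:Fin 3) 2) * permOp3 d (1 : Equiv.Perm (Fin 3)) = permOp3 d (Equiv.swap (0:Fin 3) 2) := permOp3_mul' d (by decide)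
lemma pmba (d : ℕ) : permOp3 d (Equiv.swap (0:Fin 3) 2) * permOp3 d (Equiv.swap (0:Fin 3) 1) = permOp3 d ((finRotate 3)⁻¹) := permOp3_mul' d (by decide)
lemma pmbb (d : ℕ) : permOp3 d (Equiv.swap (0:Fin 3) 2) * permOp3 d (Equiv.swap (0:Fin 3) 2) = permOp3 d (1 : Equiv.Perm (Fin 3)) := permOp3_mul' d (by decide)
lemma pmbc (d : ℕ) : permOp3 d (Equiv.swap (0:Fin 3) 2) * permOp3 d (Equiv.swap (1:Fin 3) 2) = permOp3 d (finRotate 3) := permOp3_mul' d (by decide)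
lemma pmbf (d : ℕ) : permOp3 d (Equiv.swap (0:Fin 3) 2) * permOp3 d (finRotate 3) = permOp3 d (Equiv.swap (1:Fin 3) 2) := permOp3_mul' d (by decide)
lemma pmbg (d : ℕ) : permOp3 d (Equiv.swap (0:Fin 3) 2) * permOp3 d ((finRotate 3)⁻¹) = permOp3 d (Equiv.swap (0:Fin 3) 1) := permOp3_mul' d (by decide)
lemma pmce (d : ℕ) : permOp3 d (Equiv.swap (1:Fin 3) 2) * permOp3 d (1 : Equiv.Perm (Fin 3)) = permOp3 d (Equiv.swap (1:Fin 3) 2) := permOp3_mul' d (by decide)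
lemma pmca (d : ℕ) : permOp3 d (Equiv.swap (1:Fin 3) 2) * permOp3 d (Equiv.swap (0:Fin 3) 1) = permOp3 d (finRotate 3) := permOp3_mul' d (by decide)
lemma pmcb (d : ℕ) : permOp3 d (Equiv.swap (1:Fin 3) 2) * permOp3 d (Equiv.swap (0:Fin 3) 2) = permOp3 d ((finRotate 3)⁻¹) := permOp3_mul' d (by decide)
lemma pmcc (d : ℕ) : permOp3 d (Equiv.swap (1:Fin 3) 2) * permOp3 d (Equiv.swap (1:Fin 3) 2) = permOp3 d (1 : Equiv.Perm (Fin 3)) := permOp3_mul' d (by decide)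
lemma pmcf (d : ℕ) : permOp3 d (Equiv.swap (1:Fin 3) 2) * permOp3 d (finRotate 3) = permOp3 d (Equiv.swap (0:Fin 3) 1) := permOp3_mul' d (by decide)
lemma pmcg (d : ℕ) : permOp3 d (Equiv.swap (1:Fin 3) 2) * permOp3 d ((finRotate 3)⁻¹) = permOp3 d (Equiv.swap (0:Fin 3) 2) := permOp3_mul' d (by decide)
lemma pmfe (d : ℕ) : permOp3 d (finRotate 3) * permOp3 d (1 : Equiv.Perm (Fin 3)) = permOp3 d (finRotate 3) := permOp3_mul' d (by decide)
lemma pmfa (d : ℕ) : permOp3 d (finRotate 3) * permOp3 d (Equiv.swap (0:Fin 3) 1) = permOp3 d (Equiv.swap (1:Fin 3) 2) := permOp3_mul' d (by decide)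
lemma pmfb (d : ℕ) : permOp3 d (finRotate 3) * permOp3 d (Equiv.swap (0:Fin 3) 2) = permOp3 d (Equiv.swap (0:Fin 3) 1) := permOp3_mul' d (by decide)
lemma pmfc (d : ℕ) : permOp3 d (finRotate 3) * permOp3 d (Equiv.swap (1:Fin 3) 2) = permOp3 d (Equiv.swap (0:Fin 3) 2) := permOp3_mul' d (by decide)
lemma pmff (d : ℕ) : permOp3 d (finRotate 3) * permOp3 d (finRotate 3) = permOp3 d ((finRotate 3)⁻¹) := permOp3_mul' d (by decide)
lemma pmfg (d : ℕ) : permOp3 d (finRotate 3) * permOp3 d ((finRotate 3)⁻¹) = permOp3 d (1 : Equiv.Perm (Fin 3)) := permOp3_mul' d (by decide)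
lemma pmge (d : ℕ) : permOp3 d ((finRotate 3)⁻¹) * permOp3 d (1 : Equiv.Perm (Fin 3)) = permOp3 d ((finRotate 3)⁻¹) := permOp3_mul' d (by decide)
lemma pmga (d : ℕ) : permOp3 d ((finRotate 3)⁻¹) * permOp3 d (Equiv.swap (0:Fin 3) 1) = permOp3 d (Equiv.swap (0:Fin 3) 2) := permOp3_mul' d (by decide)
lemma pmgb (d : ℕ) : permOp3 d ((finRotate 3)⁻¹) * permOp3 d (Equiv.swap (0:Fin 3) 2) = permOp3 d (Equiv.swap (1:Fin 3) 2) := permOp3_mul' d (by decide)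
lemma pmgc (d : ℕ) : permOp3 d ((finRotate 3)⁻¹) * permOp3 d (Equiv.swap (1:Fin 3) 2) = permOp3 d (Equiv.swap (0:Fin 3) 1) := permOp3_mul' d (by decide)
lemma pmgf (d : ℕ) : permOp3 d ((finRotate 3)⁻¹) * permOp3 d (finRotate 3) = permOp3 d (1 : Equiv.Perm (Fin 3)) := permOp3_mul' d (by decide)
lemma pmgg (d : ℕ) : permOp3 d ((finRotate 3)⁻¹) * permOp3 d ((finRotate 3)⁻¹) = permOp3 d (finRotate 3) := permOp3_mul' d (by decide)

/-- The operator `R` of the statement, as a definition. -/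
def Rop (d : ℕ) : Matrix (Fin 3 → Fin d) (Fin 3 → Fin d) ℂ :=
  ((d : ℂ) + 1) ^ 2 •
      (permOp3 d (Equiv.swap 0 1) + permOp3 d (finRotate 3) + permOp3 d (finRotate 3)⁻¹)
    - ((d : ℂ) + 1) •
      (permOp3 d 1 + permOp3 d (Equiv.swap 0 2) + permOp3 d (Equiv.swap 1 2))

set_option maxHeartbeats 1000000 in
lemma Rop_herm (d : ℕ) : (Rop d).IsHermitian := by
  show _ᴴ = _
  unfold Rop
  simp only [conjTranspose_sub, conjTranspose_smul, conjTranspose_add,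
    permOp3_conjTranspose, inv_inv, Equiv.swap_inv, inv_one,
    star_pow, star_add, star_one, star_natCast]
  match_scalars <;> ring

set_option maxHeartbeats 1000000 in
lemma Rop_sq (d : ℕ) : Rop d * Rop d = (((6) + (18)*(d:ℂ) + (21)*(d:ℂ)^2 + (12)*(d:ℂ)^3 + (3)*(d:ℂ)^4 : ℂ)) • permOp3 d (1 : Equiv.Perm (Fin 3))
      + (((-6) + (-18)*(d:ℂ) + (-18)*(d:ℂ)^2 + (-6)*(d:ℂ)^3 : ℂ)) • permOp3 d (Equiv.swap (0:Fin 3) 1)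
      + (((2) + (6)*(d:ℂ) + (8)*(d:ℂ)^2 + (6)*(d:ℂ)^3 + (2)*(d:ℂ)^4 : ℂ)) • permOp3 d (Equiv.swap (0:Fin 3) 2)
      + (((2) + (6)*(d:ℂ) + (8)*(d:ℂ)^2 + (6)*(d:ℂ)^3 + (2)*(d:ℂ)^4 : ℂ)) • permOp3 d (Equiv.swap (1:Fin 3) 2)
      + (((-2) + (-6)*(d:ℂ) + (-5)*(d:ℂ)^2 + (1)*(d:ℂ)^4 : ℂ)) • permOp3 d (finRotate 3)
      + (((-2) + (-6)*(d:ℂ) + (-5)*(d:ℂ)^2 + (1)*(d:ℂ)^4 : ℂ)) • permOp3 d ((finRotate 3)⁻¹) := by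
  unfold Rop
  simp only [sub_mul, mul_sub, add_mul, mul_add, smul_mul_assoc, mul_smul_comm, smul_smul,
    smul_sub, smul_add, pmee, pmea, pmeb, pmec, pmef, pmeg, pmae, pmaa, pmab, pmac, pmaf, pmag, pmbe, pmba, pmbb, pmbc, pmbf, pmbg, pmce, pmca, pmcb, pmcc, pmcf, pmcg, pmfe, pmfa, pmfb, pmfc, pmff, pmfg, pmge, pmga, pmgb, pmgc, pmgf, pmgg]
  match_scalars <;> ring

set_option maxHeartbeats 1000000 in
lemma Rop_cube (d : ℕ) : Rop d * Rop d * Rop d = (((-20) + (-90)*(d:ℂ) + (-165)*(d:ℂ)^2 + (-153)*(d:ℂ)^3 + (-69)*(d:ℂ)^4 + (-9)*(d:ℂ)^5 + (2)*(d:ℂ)^6 : ℂ)) • permOp3 d (1 : Equiv.Perm (Fin 3))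
      + (((20) + (90)*(d:ℂ) + (165)*(d:ℂ)^2 + (162)*(d:ℂ)^3 + (96)*(d:ℂ)^4 + (36)*(d:ℂ)^5 + (7)*(d:ℂ)^6 : ℂ)) • permOp3 d (Equiv.swap (0:Fin 3) 1)
      + (((-12) + (-54)*(d:ℂ) + (-99)*(d:ℂ)^2 + (-90)*(d:ℂ)^3 + (-36)*(d:ℂ)^4 + (3)*(d:ℂ)^6 : ℂ)) • permOp3 d (Equiv.swap (0:Fin 3) 2)
      + (((-12) + (-54)*(d:ℂ) + (-99)*(d:ℂ)^2 + (-90)*(d:ℂ)^3 + (-36)*(d:ℂ)^4 + (3)*(d:ℂ)^6 : ℂ)) • permOp3 d (Equiv.swap (1:Fin 3) 2)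
      + (((12) + (54)*(d:ℂ) + (99)*(d:ℂ)^2 + (99)*(d:ℂ)^3 + (63)*(d:ℂ)^4 + (27)*(d:ℂ)^5 + (6)*(d:ℂ)^6 : ℂ)) • permOp3 d (finRotate 3)
      + (((12) + (54)*(d:ℂ) + (99)*(d:ℂ)^2 + (99)*(d:ℂ)^3 + (63)*(d:ℂ)^4 + (27)*(d:ℂ)^5 + (6)*(d:ℂ)^6 : ℂ)) • permOp3 d ((finRotate 3)⁻¹) := by
  conv_lhs => rw [Rop_sq]
  unfold Rop
  simp only [sub_mul, mul_sub, add_mul, mul_add, smul_mul_assoc, mul_smul_comm, smul_smul,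
    smul_sub, smul_add, pmee, pmea, pmeb, pmec, pmef, pmeg, pmae, pmaa, pmab, pmac, pmaf, pmag, pmbe, pmba, pmbb, pmbc, pmbf, pmbg, pmce, pmca, pmcb, pmcc, pmcf, pmcg, pmfe, pmfa, pmfb, pmfc, pmff, pmfg, pmge, pmga, pmgb, pmgc, pmgf, pmgg]
  match_scalars <;> ring

set_option maxHeartbeats 1000000 in
lemma Rop_four (d : ℕ) : Rop d * Rop d * Rop d * Rop d = (((88) + (528)*(d:ℂ) + (1364)*(d:ℂ)^2 + (1980)*(d:ℂ)^3 + (1779)*(d:ℂ)^4 + (1044)*(d:ℂ)^5 + (422)*(d:ℂ)^6 + (120)*(d:ℂ)^7 + (19)*(d:ℂ)^8 : ℂ)) • permOp3 d (1 : Equiv.Perm (Fin 3))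
      + (((-88) + (-528)*(d:ℂ) + (-1364)*(d:ℂ)^2 + (-1980)*(d:ℂ)^3 + (-1752)*(d:ℂ)^4 + (-936)*(d:ℂ)^5 + (-260)*(d:ℂ)^6 + (-12)*(d:ℂ)^7 + (8)*(d:ℂ)^8 : ℂ)) • permOp3 d (Equiv.swap (0:Fin 3) 1)
      + (((40) + (240)*(d:ℂ) + (620)*(d:ℂ)^2 + (900)*(d:ℂ)^3 + (816)*(d:ℂ)^4 + (504)*(d:ℂ)^5 + (236)*(d:ℂ)^6 + (84)*(d:ℂ)^7 + (16)*(d:ℂ)^8 : ℂ)) • permOp3 d (Equiv.swap (0:Fin 3) 2)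
      + (((40) + (240)*(d:ℂ) + (620)*(d:ℂ)^2 + (900)*(d:ℂ)^3 + (816)*(d:ℂ)^4 + (504)*(d:ℂ)^5 + (236)*(d:ℂ)^6 + (84)*(d:ℂ)^7 + (16)*(d:ℂ)^8 : ℂ)) • permOp3 d (Equiv.swap (1:Fin 3) 2)
      + (((-40) + (-240)*(d:ℂ) + (-620)*(d:ℂ)^2 + (-900)*(d:ℂ)^3 + (-789)*(d:ℂ)^4 + (-396)*(d:ℂ)^5 + (-74)*(d:ℂ)^6 + (24)*(d:ℂ)^7 + (11)*(d:ℂ)^8 : ℂ)) • permOp3 d (finRotate 3)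
      + (((-40) + (-240)*(d:ℂ) + (-620)*(d:ℂ)^2 + (-900)*(d:ℂ)^3 + (-789)*(d:ℂ)^4 + (-396)*(d:ℂ)^5 + (-74)*(d:ℂ)^6 + (24)*(d:ℂ)^7 + (11)*(d:ℂ)^8 : ℂ)) • permOp3 d ((finRotate 3)⁻¹) := by
  conv_lhs => rw [Rop_cube]
  unfold Rop
  simp only [sub_mul, mul_sub, add_mul, mul_add, smul_mul_assoc, mul_smul_comm, smul_smul,
    smul_sub, smul_add, pmee, pmea, pmeb, pmec, pmef, pmeg, pmae, pmaa, pmab, pmac, pmaf, pmag, pmbe, pmba, pmbb, pmbc, pmbf, pmbg, pmce, pmca, pmcb, pmcc, pmcf, pmcg, pmfe, pmfa, pmfb, pmfc, pmff, pmfg, pmge, pmga, pmgb, pmgc, pmgf, pmgg]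
  match_scalars <;> ring

set_option maxHeartbeats 1000000 in
lemma Rop_ann (d : ℕ) : Rop d * Rop d * Rop d * Rop d
    = (2*(d:ℂ)^2 - 2) • (Rop d * Rop d * Rop d) - (-5*(d:ℂ)^4 - 24*(d:ℂ)^3 - 41*(d:ℂ)^2 - 30*(d:ℂ) - 8) • (Rop d * Rop d) + (-6*(d:ℂ)^6 - 42*(d:ℂ)^5 - 114*(d:ℂ)^4 - 150*(d:ℂ)^3 - 96*(d:ℂ)^2 - 24*(d:ℂ)) • Rop d := by
  rw [Rop_four, Rop_cube, Rop_sq]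
  unfold Rop
  match_scalars <;> ring

set_option maxHeartbeats 1000000 in
lemma Rop_tr1 (d : ℕ) : (Rop d).trace = (d:ℂ)^3 + 3*(d:ℂ)^2 + 2*(d:ℂ) := by
  unfold Rop
  simp only [trace_sub, trace_add, trace_smul, trace_e, trace_s01, trace_s02, trace_s12,
    trace_rot, trace_rot2, smul_eq_mul]
  ring

set_option maxHeartbeats 1000000 in
lemma Rop_tr2 (d : ℕ) : (Rop d * Rop d).trace = 3*(d:ℂ)^7 + 16*(d:ℂ)^6 + 29*(d:ℂ)^5
    + 16*(d:ℂ)^4 - 10*(d:ℂ)^3 - 14*(d:ℂ)^2 - 4*(d:ℂ) := by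
  rw [Rop_sq]
  simp only [trace_sub, trace_add, trace_smul, trace_e, trace_s01, trace_s02, trace_s12,
    trace_rot, trace_rot2, smul_eq_mul]
  ring

set_option maxHeartbeats 1000000 in
lemma Rop_tr3 (d : ℕ) : (Rop d * Rop d * Rop d).trace = 2*(d:ℂ)^9 + 4*(d:ℂ)^8 - 21*(d:ℂ)^7
    - 75*(d:ℂ)^6 - 57*(d:ℂ)^5 + 75*(d:ℂ)^4 + 160*(d:ℂ)^3 + 104*(d:ℂ)^2 + 24*(d:ℂ) := by
  rw [Rop_cube]
  simp only [trace_sub, trace_add, trace_smul, trace_e, trace_s01, trace_s02, trace_s12,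
    trace_rot, trace_rot2, smul_eq_mul]
  ring

set_option maxHeartbeats 1600000 in
/-- the operator
`R = (d+1)²[π_{(12)} + π_{(123)} + π_{(132)}] − (d+1)[π_e + π_{(13)} + π_{(23)}]`
on `H^{⊗3}` is Hermitian, and its singular values (absolute eigenvalues) are
`0`, `3d(d+1)`, `(d+1)(d+2)` and `2(d+1)(d+2)`, with respective multiplicities
`2·C(d+1,3)`, `C(d+2,3)`, `C(d,3)` and `2·C(d+1,3)`. -/
theorem singular_values_of_R (d : ℕ)
    (R : Matrix (Fin 3 → Fin d) (Fin 3 → Fin d) ℂ)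
    (hRdef : R = ((d : ℂ) + 1) ^ 2 •
        (permOp3 d (Equiv.swap 0 1) + permOp3 d (finRotate 3) + permOp3 d (finRotate 3)⁻¹)
      - ((d : ℂ) + 1) •
        (permOp3 d 1 + permOp3 d (Equiv.swap 0 2) + permOp3 d (Equiv.swap 1 2))) :
    ∃ hR : R.IsHermitian,
      (Finset.univ.val.map fun i => |hR.eigenvalues i|)
        = Multiset.replicate (2 * Nat.choose (d + 1) 3) (0 : ℝ)
          + Multiset.replicate (Nat.choose (d + 2) 3) ((3 * d * (d + 1) : ℝ))
          + Multiset.replicate (Nat.choose d 3) (((d + 1) * (d + 2) : ℝ))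
          + Multiset.replicate (2 * Nat.choose (d + 1) 3) ((2 * (d + 1) * (d + 2) : ℝ)) := by
  classical
  have hRop : R = Rop d := hRdef
  subst hRop
  have hherm : (Rop d).IsHermitian := Rop_herm d
  have hann := Rop_ann d
  have tR1 := Rop_tr1 d
  have tR2 := Rop_tr2 d
  have tR3 := Rop_tr3 d
  refine ⟨hherm, ?_⟩
  set ev : (Fin 3 → Fin d) → ℝ := hherm.eigenvalues with hev
  -- spectral theorem consequences
  set U : Matrix (Fin 3 → Fin d) (Fin 3 → Fin d) ℂ := (hherm.eigenvectorUnitary :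
    Matrix (Fin 3 → Fin d) (Fin 3 → Fin d) ℂ) with hU
  have hUr : U * star U = 1 := mem_unitaryGroup_iff.mp hherm.eigenvectorUnitary.2
  have cancel : ∀ X : Matrix (Fin 3 → Fin d) (Fin 3 → Fin d) ℂ, U * (star U * X) = X :=
    fun X => by rw [← Matrix.mul_assoc, hUr, Matrix.one_mul]
  have hkey : star U * Rop d * U = diagonal (fun i => ((ev i : ℝ) : ℂ)) :=
    by
      have := hherm.conjStarAlgAut_star_eigenvectorUnitary
      simp only [Unitary.conjStarAlgAut_apply, Unitary.coe_star, star_star] at this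
      exact this
  set fC : (Fin 3 → Fin d) → ℂ := fun i => ((ev i : ℝ) : ℂ) with hfC
  have hD2 : star U * (Rop d * Rop d) * U = diagonal fC * diagonal fC := by
    rw [← hkey]; simp only [Matrix.mul_assoc, cancel]
  have hD3 : star U * (Rop d * Rop d * Rop d) * U = diagonal fC * diagonal fC * diagonal fC := by
    rw [← hkey]; simp only [Matrix.mul_assoc, cancel]
  have hD4 : star U * (Rop d * Rop d * Rop d * Rop d) * U
      = diagonal fC * diagonal fC * diagonal fC * diagonal fC := by
    rw [← hkey]; simp only [Matrix.mul_assoc, cancel]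
  have tr_conj : ∀ X : Matrix (Fin 3 → Fin d) (Fin 3 → Fin d) ℂ,
      (star U * X * U).trace = X.trace := fun X => by
    rw [Matrix.trace_mul_cycle, hUr, Matrix.one_mul]
  have hfCi : ∀ i, fC i = ((ev i : ℝ) : ℂ) := fun i => rfl
  -- quartic identity for each eigenvalue
  have hquart : ∀ i, (ev i)^4 = (2*(d:ℝ)^2 - 2) * (ev i)^3
      - (-5*(d:ℝ)^4 - 24*(d:ℝ)^3 - 41*(d:ℝ)^2 - 30*(d:ℝ) - 8) * (ev i)^2
      + (-6*(d:ℝ)^6 - 42*(d:ℝ)^5 - 114*(d:ℝ)^4 - 150*(d:ℝ)^3 - 96*(d:ℝ)^2 - 24*(d:ℝ)) * (ev i) := by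
    intro i
    have h4 : star U * (Rop d * Rop d * Rop d * Rop d) * U
        = (2*(d:ℂ)^2 - 2) • (diagonal fC * diagonal fC * diagonal fC) - (-5*(d:ℂ)^4 - 24*(d:ℂ)^3 - 41*(d:ℂ)^2 - 30*(d:ℂ) - 8) • (diagonal fC * diagonal fC)
          + (-6*(d:ℂ)^6 - 42*(d:ℂ)^5 - 114*(d:ℂ)^4 - 150*(d:ℂ)^3 - 96*(d:ℂ)^2 - 24*(d:ℂ)) • diagonal fC := by
      rw [hann, ← hD3, ← hD2, ← hkey]
      simp only [Matrix.mul_add, Matrix.add_mul, Matrix.mul_sub, Matrix.sub_mul,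
        Matrix.mul_smul, Matrix.smul_mul]
    rw [hD4] at h4
    have h5 := congrFun (congrFun h4 i) i
    simp only [Matrix.diagonal_mul_diagonal, Matrix.diagonal_apply_eq, Matrix.sub_apply,
      Matrix.add_apply, Matrix.smul_apply, smul_eq_mul, Pi.mul_apply, hfCi] at h5
    apply Complex.ofReal_inj.mp
    push_cast
    linear_combination h5
  have hroot : ∀ i, ev i = 0 ∨ ev i = 3*(d:ℝ)*((d:ℝ)+1) ∨ ev i = ((d:ℝ)+1)*((d:ℝ)+2)
      ∨ ev i = -(2*((d:ℝ)+1)*((d:ℝ)+2)) := by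
    intro i
    have hfac : (ev i) * (ev i - 3*(d:ℝ)*((d:ℝ)+1)) * (ev i - ((d:ℝ)+1)*((d:ℝ)+2))
        * (ev i + 2*((d:ℝ)+1)*((d:ℝ)+2)) = 0 := by
      linear_combination hquart i
    rcases mul_eq_zero.mp hfac with h | h
    · rcases mul_eq_zero.mp h with h | h
      · rcases mul_eq_zero.mp h with h | h
        · exact Or.inl h
        · exact Or.inr (Or.inl (by linarith))
      · exact Or.inr (Or.inr (Or.inl (by linarith)))
    · exact Or.inr (Or.inr (Or.inr (by linarith)))
  -- moments
  have hm1 : ∑ i, ev i = (d:ℝ)^3 + 3*(d:ℝ)^2 + 2*(d:ℝ) := by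
    have t1 : (diagonal fC).trace = (Rop d).trace := by rw [← hkey]; exact tr_conj (Rop d)
    rw [Matrix.trace_diagonal, tR1] at t1
    simp only [hfCi] at t1
    apply Complex.ofReal_inj.mp
    push_cast
    exact t1
  have hm2 : ∑ i, (ev i)^2 = 3*(d:ℝ)^7 + 16*(d:ℝ)^6 + 29*(d:ℝ)^5 + 16*(d:ℝ)^4 - 10*(d:ℝ)^3
      - 14*(d:ℝ)^2 - 4*(d:ℝ) := by
    have t1 : (diagonal fC * diagonal fC).trace = (Rop d * Rop d).trace := by
      rw [← hD2]; exact tr_conj _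
    rw [Matrix.diagonal_mul_diagonal, Matrix.trace_diagonal, tR2] at t1
    simp only [Pi.mul_apply, hfCi] at t1
    apply Complex.ofReal_inj.mp
    push_cast
    rw [← t1]
    apply Finset.sum_congr rfl
    intros; ring
  have hm3 : ∑ i, (ev i)^3 = 2*(d:ℝ)^9 + 4*(d:ℝ)^8 - 21*(d:ℝ)^7 - 75*(d:ℝ)^6 - 57*(d:ℝ)^5
      + 75*(d:ℝ)^4 + 160*(d:ℝ)^3 + 104*(d:ℝ)^2 + 24*(d:ℝ) := by
    have t1 : (diagonal fC * diagonal fC * diagonal fC).trace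
        = (Rop d * Rop d * Rop d).trace := by
      rw [← hD3]; exact tr_conj _
    rw [Matrix.diagonal_mul_diagonal, Matrix.diagonal_mul_diagonal, Matrix.trace_diagonal,
      tR3] at t1
    simp only [Pi.mul_apply, hfCi] at t1
    apply Complex.ofReal_inj.mp
    push_cast
    rw [← t1]
    apply Finset.sum_congr rfl
    intros; ring
  have hcard : Fintype.card (Fin 3 → Fin d) = d^3 := by
    rw [Fintype.card_pi_const, Fintype.card_fin]
  rcases Nat.lt_or_ge d 2 with hd | hd
  · interval_cases d
    · -- d = 0
      have hemp : IsEmpty (Fin 3 → Fin 0) := ⟨fun f => (f 0).elim0⟩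
      rw [@Finset.univ_eq_empty _ _ hemp]
      rw [show Nat.choose 1 3 = 0 from rfl, show Nat.choose 2 3 = 0 from rfl,
        show Nat.choose 0 3 = 0 from rfl]
      simp
    · -- d = 1
      have huniv : (Finset.univ : Finset (Fin 3 → Fin 1)) = {fun _ => 0} := by decide
      rw [huniv] at hm1 ⊢
      rw [Finset.sum_singleton] at hm1
      norm_num at hm1
      rw [show Nat.choose 2 3 = 0 from rfl, show Nat.choose 3 3 = 1 from rfl,
        show Nat.choose 1 3 = 0 from rfl]
      simp [hm1]
      norm_num
  · -- d ≥ 2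
    obtain ⟨m, rfl⟩ : ∃ m, d = m + 2 := ⟨d - 2, by omega⟩
    set D : ℝ := ((m+2 : ℕ) : ℝ) with hD
    have hD2 : (2:ℝ) ≤ D := by
      rw [hD]; exact_mod_cast Nat.le_add_left 2 m
    have hmemE : ∀ x ∈ Multiset.map ev Finset.univ.val,
        x = 0 ∨ x = 3*D*(D+1) ∨ x = (D+1)*(D+2) ∨ x = -(2*(D+1)*(D+2)) := by
      intro x hx
      obtain ⟨i, -, rfl⟩ := Multiset.mem_map.mp hx
      exact hroot i
    have hne12 : (0:ℝ) ≠ 3*D*(D+1) := by nlinarith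
    have hne13 : (0:ℝ) ≠ (D+1)*(D+2) := by nlinarith
    have hne14 : (0:ℝ) ≠ -(2*(D+1)*(D+2)) := by nlinarith
    have hne23 : 3*D*(D+1) ≠ (D+1)*(D+2) := by nlinarith
    have hne24 : 3*D*(D+1) ≠ -(2*(D+1)*(D+2)) := by nlinarith
    have hne34 : (D+1)*(D+2) ≠ -(2*(D+1)*(D+2)) := by nlinarith
    have hdec := multiset_decomp 0 (3*D*(D+1)) ((D+1)*(D+2)) (-(2*(D+1)*(D+2)))
      hne12 hne13 hne14 hne23 hne24 hne34 (Multiset.map ev Finset.univ.val) hmemE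
    set n1 := (Multiset.map ev Finset.univ.val).count 0 with hn1d
    set n2 := (Multiset.map ev Finset.univ.val).count (3*D*(D+1)) with hn2d
    set n3 := (Multiset.map ev Finset.univ.val).count ((D+1)*(D+2)) with hn3d
    set n4 := (Multiset.map ev Finset.univ.val).count (-(2*(D+1)*(D+2))) with hn4d
    -- cardinality equation
    have hc0 : (n1:ℝ) + n2 + n3 + n4 = D^3 := by
      have hcc := congrArg Multiset.card hdec
      simp only [Multiset.card_map, Multiset.card_add, Multiset.card_replicate] at hcc
      have : Finset.univ.val.card = Fintype.card (Fin 3 → Fin (m+2)) := rfl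
      rw [this, hcard] at hcc
      rw [hD]
      exact_mod_cast congrArg (Nat.cast : ℕ → ℝ) hcc.symm
    -- moment equations
    have hs1 : (n1:ℝ)*0 + n2*(3*D*(D+1)) + n3*((D+1)*(D+2)) + n4*(-(2*(D+1)*(D+2)))
        = D^3 + 3*D^2 + 2*D := by
      have e1 : (Multiset.map ev Finset.univ.val).sum = ∑ i, ev i := rfl
      rw [hdec] at e1
      simp only [Multiset.sum_add, Multiset.sum_replicate, nsmul_eq_mul] at e1
      rw [hm1] at e1
      linear_combination e1
    have hs2 : (n1:ℝ)*0^2 + n2*(3*D*(D+1))^2 + n3*((D+1)*(D+2))^2 + n4*(-(2*(D+1)*(D+2)))^2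
        = 3*D^7 + 16*D^6 + 29*D^5 + 16*D^4 - 10*D^3 - 14*D^2 - 4*D := by
      have e1 : ((Multiset.map ev Finset.univ.val).map (fun x => x^2)).sum
          = ∑ i, (ev i)^2 := by rw [Multiset.map_map]; rfl
      rw [hdec] at e1
      simp only [Multiset.map_add, Multiset.map_replicate, Multiset.sum_add,
        Multiset.sum_replicate, nsmul_eq_mul] at e1
      rw [hm2] at e1
      linear_combination e1
    have hs3 : (n1:ℝ)*0^3 + n2*(3*D*(D+1))^3 + n3*((D+1)*(D+2))^3 + n4*(-(2*(D+1)*(D+2)))^3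
        = 2*D^9 + 4*D^8 - 21*D^7 - 75*D^6 - 57*D^5 + 75*D^4 + 160*D^3 + 104*D^2 + 24*D := by
      have e1 : ((Multiset.map ev Finset.univ.val).map (fun x => x^3)).sum
          = ∑ i, (ev i)^3 := by rw [Multiset.map_map]; rfl
      rw [hdec] at e1
      simp only [Multiset.map_add, Multiset.map_replicate, Multiset.sum_add,
        Multiset.sum_replicate, nsmul_eq_mul] at e1
      rw [hm3] at e1
      linear_combination e1
    -- solve the Vandermonde system
    have hposA : (0:ℝ) < 6*D*(D-1)*(5*D+4)*(D+1)^3 := by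
      have h1 : (0:ℝ) < D := by linarith
      have h2 : (0:ℝ) < D - 1 := by linarith
      have h3 : (0:ℝ) < 5*D+4 := by linarith
      have h4 : (0:ℝ) < (D+1)^3 := by nlinarith
      exact mul_pos (mul_pos (mul_pos (mul_pos (by norm_num) h1) h2) h3) h4
    have hposB : (0:ℝ) < 6*(D-1)*(D+1)^3*(D+2)^2 := by
      have h2 : (0:ℝ) < D - 1 := by linarith
      have h4 : (0:ℝ) < (D+1)^3 := by nlinarith
      have h5 : (0:ℝ) < (D+2)^2 := by nlinarith
      exact mul_pos (mul_pos (mul_pos (by norm_num) h2) h4) h5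
    have hposC : (0:ℝ) < 6*(5*D+4)*(D+1)^3*(D+2)^2 := by
      have h3 : (0:ℝ) < 5*D+4 := by linarith
      have h4 : (0:ℝ) < (D+1)^3 := by nlinarith
      have h5 : (0:ℝ) < (D+2)^2 := by nlinarith
      exact mul_pos (mul_pos (mul_pos (by norm_num) h3) h4) h5
    have k2 : (n2:ℝ) = (D+2)*(D+1)*D/6 := by
      have key : (n2:ℝ) * (6*D*(D-1)*(5*D+4)*(D+1)^3)
          = ((D+2)*(D+1)*D/6) * (6*D*(D-1)*(5*D+4)*(D+1)^3) := by
        linear_combination (-(2*D^4+12*D^3+26*D^2+24*D+8)) * hs1 + (D^2+3*D+2) * hs2 + hs3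
      exact mul_right_cancel₀ (ne_of_gt hposA) key
    have k3 : (n3:ℝ) = D*(D-1)*(D-2)/6 := by
      have key : (n3:ℝ) * (-(6*(D-1)*(D+1)^3*(D+2)^2))
          = (D*(D-1)*(D-2)/6) * (-(6*(D-1)*(D+1)^3*(D+2)^2)) := by
        linear_combination (-(6*D^4+24*D^3+30*D^2+12*D)) * hs1 + (-D^2+3*D+4) * hs2 + hs3
      exact mul_right_cancel₀ (neg_ne_zero.mpr (ne_of_gt hposB)) key
    have k4 : (n4:ℝ) = (D+1)*D*(D-1)/3 := by
      have key : (n4:ℝ) * (-(6*(5*D+4)*(D+1)^3*(D+2)^2))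
          = ((D+1)*D*(D-1)/3) * (-(6*(5*D+4)*(D+1)^3*(D+2)^2)) := by
        linear_combination (3*D^4+12*D^3+15*D^2+6*D) * hs1 + (-(4*D^2+6*D+2)) * hs2 + hs3
      exact mul_right_cancel₀ (neg_ne_zero.mpr (ne_of_gt hposC)) key
    have k1 : (n1:ℝ) = (D+1)*D*(D-1)/3 := by
      linear_combination hc0 - k2 - k3 - k4
    -- convert counts to binomial coefficients
    have hn2 : n2 = Nat.choose (m+2+2) 3 := by
      have hnat : n2 * 6 = (m+4)*(m+3)*(m+2) := by
        have h1 : (n2:ℝ)*6 = (D+2)*(D+1)*D := by linear_combination 6*k2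
        rw [hD] at h1
        have h2 : ((n2 * 6 : ℕ):ℝ) = (((m+4)*(m+3)*(m+2) : ℕ):ℝ) := by
          push_cast
          push_cast at h1
          linear_combination h1
        exact_mod_cast h2
      have h63 : 6 * Nat.choose (m+2+2) 3 = (m+4)*(m+3)*(m+2) := by
        rw [six_choose (m+2)]
      have : n2 * 6 = Nat.choose (m+2+2) 3 * 6 := by rw [hnat, ← h63]; ring
      exact Nat.eq_of_mul_eq_mul_right (by norm_num) this
    have hn3 : n3 = Nat.choose (m+2) 3 := by
      have hnat : n3 * 6 = (m+2)*(m+1)*m := by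
        have h1 : (n3:ℝ)*6 = D*(D-1)*(D-2) := by linear_combination 6*k3
        rw [hD] at h1
        have h2 : ((n3 * 6 : ℕ):ℝ) = (((m+2)*(m+1)*m : ℕ):ℝ) := by
          push_cast
          push_cast at h1
          linear_combination h1
        exact_mod_cast h2
      have h63 : 6 * Nat.choose (m+2) 3 = (m+2)*(m+1)*m := six_choose m
      have : n3 * 6 = Nat.choose (m+2) 3 * 6 := by rw [hnat, ← h63]; ring
      exact Nat.eq_of_mul_eq_mul_right (by norm_num) this
    have hn4 : n4 = 2 * Nat.choose (m+2+1) 3 := by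
      have hnat : n4 * 3 = (m+3)*(m+2)*(m+1) := by
        have h1 : (n4:ℝ)*3 = (D+1)*D*(D-1) := by linear_combination 3*k4
        rw [hD] at h1
        have h2 : ((n4 * 3 : ℕ):ℝ) = (((m+3)*(m+2)*(m+1) : ℕ):ℝ) := by
          push_cast
          push_cast at h1
          linear_combination h1
        exact_mod_cast h2
      have h63 : 6 * Nat.choose (m+2+1) 3 = (m+3)*(m+2)*(m+1) := by
        rw [show m+2+1 = m+1+2 from by omega, six_choose (m+1)]
      have : n4 * 3 = (2 * Nat.choose (m+2+1) 3) * 3 := by rw [hnat, ← h63]; ring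
      exact Nat.eq_of_mul_eq_mul_right (by norm_num) this
    have hn1 : n1 = 2 * Nat.choose (m+2+1) 3 := by
      have hnat : n1 * 3 = (m+3)*(m+2)*(m+1) := by
        have h1 : (n1:ℝ)*3 = (D+1)*D*(D-1) := by linear_combination 3*k1
        rw [hD] at h1
        have h2 : ((n1 * 3 : ℕ):ℝ) = (((m+3)*(m+2)*(m+1) : ℕ):ℝ) := by
          push_cast
          push_cast at h1
          linear_combination h1
        exact_mod_cast h2
      have h63 : 6 * Nat.choose (m+2+1) 3 = (m+3)*(m+2)*(m+1) := by
        rw [show m+2+1 = m+1+2 from by omega, six_choose (m+1)]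
      have : n1 * 3 = (2 * Nat.choose (m+2+1) 3) * 3 := by rw [hnat, ← h63]; ring
      exact Nat.eq_of_mul_eq_mul_right (by norm_num) this
    -- final assembly
    have habs0 : (0:ℝ) ≤ 3*D*(D+1) := by nlinarith
    have habs1 : (0:ℝ) ≤ (D+1)*(D+2) := by nlinarith
    have habs2 : (0:ℝ) ≤ 2*(D+1)*(D+2) := by nlinarith
    calc (Finset.univ.val.map fun i => |ev i|)
        = Multiset.map (fun x => |x|) (Multiset.map ev Finset.univ.val) := by
          rw [Multiset.map_map]; rfl
      _ = Multiset.replicate n1 |(0:ℝ)| + Multiset.replicate n2 |3*D*(D+1)|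
          + Multiset.replicate n3 |(D+1)*(D+2)| + Multiset.replicate n4 |(-(2*(D+1)*(D+2)))| := by
          rw [hdec]
          simp only [Multiset.map_add, Multiset.map_replicate]
      _ = Multiset.replicate (2 * Nat.choose (m+2+1) 3) (0 : ℝ)
          + Multiset.replicate (Nat.choose (m+2+2) 3) (3*D*(D+1))
          + Multiset.replicate (Nat.choose (m+2) 3) ((D+1)*(D+2))
          + Multiset.replicate (2 * Nat.choose (m+2+1) 3) (2*(D+1)*(D+2)) := by
          rw [hn1, hn2, hn3, hn4, abs_zero, abs_of_nonneg habs0, abs_of_nonneg habs1,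
            abs_neg, abs_of_nonneg habs2]
end
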